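/- (Necessity of the δ < Δ/2 condition, counterexample.) Let X = {x₁, x₂, x₃} ⊂ ℝ² be the vertices of an equilateral triangle of side length l = 2√3, translated so that x₃ is at the origin, and let Y = {0, y₂} with ‖y₂‖ = l. With δ = 2 (note δ > Δ/2 = √3), there exists a rotation R(θ₀) such that ‖x₁ - R(θ₀) y₂‖ ≤ δ and ‖x₂ - R(θ₀) y₂‖ ≤ δ simultaneously; i.e., the two circles of radius 2 centered at x₁ and x₂ intersect at a point at distance l from the origin. -/

import Mathlib

/-- counterexample showing `δ < Δ/2` is necessary:
`x₃ = 0, x₁, x₂` are the vertices of an equilateral triangle of side `l = 2√3`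
with one vertex at the origin, and `‖y₂‖ = l`.  With `δ = 2 > Δ/2 = √3`, there
is a rotation `R(θ₀)` with `‖x₁ - R(θ₀) y₂‖ ≤ 2` and `‖x₂ - R(θ₀) y₂‖ ≤ 2`
simultaneously. -/
theorem stmt_9 (x₁ x₂ y₂ : ℂ)
    (h1 : ‖x₁‖ = 2 * Real.sqrt 3) (h2 : ‖x₂‖ = 2 * Real.sqrt 3)
    (h12 : ‖x₁ - x₂‖ = 2 * Real.sqrt 3)
    (hy : ‖y₂‖ = 2 * Real.sqrt 3) :
    ∃ θ₀ : ℝ, ‖x₁ - Complex.exp (θ₀ * Complex.I) * y₂‖ ≤ 2 ∧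
      ‖x₂ - Complex.exp (θ₀ * Complex.I) * y₂‖ ≤ 2 := by
  have hs : Real.sqrt 3 ^ 2 = 3 := Real.sq_sqrt (by norm_num)
  have hs0 : (0:ℝ) ≤ Real.sqrt 3 := Real.sqrt_nonneg 3
  have hs1 : (5/3 : ℝ) ≤ Real.sqrt 3 := by nlinarith
  set p : ℂ := ((Real.sqrt 3 / 3 : ℝ) : ℂ) * (x₁ + x₂) with hp
  -- normSq facts
  have n1 : Complex.normSq x₁ = 12 := by
    have := Complex.sq_norm x₁
    rw [h1] at this
    nlinarith
  have n2 : Complex.normSq x₂ = 12 := by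
    have := Complex.sq_norm x₂
    rw [h2] at this
    nlinarith
  have n12 : Complex.normSq (x₁ - x₂) = 12 := by
    have := Complex.sq_norm (x₁ - x₂)
    rw [h12] at this
    nlinarith
  have hre : (x₁ * (starRingEnd ℂ) x₂).re = 6 := by
    have := Complex.normSq_sub x₁ x₂
    rw [n1, n2, n12] at this
    linarith
  have hy0 : y₂ ≠ 0 := by
    intro h
    rw [h, norm_zero] at hy
    nlinarith
  have hnp : ‖p‖ = 2 * Real.sqrt 3 := by
    have habs : Complex.normSq p = 12 := by
      rw [hp]
      simp only [map_mul, Complex.normSq_ofReal, Complex.normSq_add, n1, n2, hre]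
      field_simp
      nlinarith
    have := Complex.sq_norm p
    rw [habs] at this
    nlinarith [this, norm_nonneg p]
  -- choose θ₀
  refine ⟨(p / y₂).arg, ?_⟩
  have hunit : ‖p / y₂‖ = 1 := by
    rw [norm_div]
    rw [hnp, hy]
    field_simp
  have hrot : Complex.exp ((p / y₂).arg * Complex.I) * y₂ = p := by
    have := Complex.norm_mul_exp_arg_mul_I (p / y₂)
    rw [hunit] at this
    push_cast at this
    rw [one_mul] at this
    rw [this]
    field_simp
  rw [hrot]
  -- distances
  have key : ∀ x : ℂ, Complex.normSq x = 12 → (x * (starRingEnd ℂ) (x₁ + x₂)).re = 18 →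
      ‖x - p‖ ≤ 2 := by
    intro x hx hxr
    have hd : Complex.normSq (x - p) = 24 - 12 * Real.sqrt 3 := by
      rw [Complex.normSq_sub, hx]
      have hnp2 : Complex.normSq p = 12 := by
        rw [hp]
        simp only [map_mul, Complex.normSq_ofReal, Complex.normSq_add, n1, n2, hre]
        field_simp
        nlinarith
      rw [hnp2, hp]
      have : (x * (starRingEnd ℂ) (((Real.sqrt 3 / 3 : ℝ) : ℂ) * (x₁ + x₂))).re
          = (Real.sqrt 3 / 3) * (x * (starRingEnd ℂ) (x₁ + x₂)).re := by
        rw [map_mul, Complex.conj_ofReal]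
        rw [show x * (((Real.sqrt 3 / 3 : ℝ) : ℂ) * (starRingEnd ℂ) (x₁ + x₂))
            = ((Real.sqrt 3 / 3 : ℝ) : ℂ) * (x * (starRingEnd ℂ) (x₁ + x₂)) by ring]
        exact Complex.re_ofReal_mul _ _
      rw [this, hxr]
      ring
    have h0 : (0:ℝ) ≤ ‖x - p‖ := norm_nonneg _
    have hsq := Complex.sq_norm (x - p)
    rw [hd] at hsq
    nlinarith [hsq]
  constructor
  · apply key x₁ n1
    rw [map_add, mul_add, Complex.add_re]
    have : (x₁ * (starRingEnd ℂ) x₁).re = 12 := by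
      rw [Complex.mul_conj]; simp [n1]
    rw [this, hre]
    norm_num
  · apply key x₂ n2
    rw [map_add, mul_add, Complex.add_re]
    have h21 : (x₂ * (starRingEnd ℂ) x₁).re = 6 := by
      have : (x₂ * (starRingEnd ℂ) x₁).re = (x₁ * (starRingEnd ℂ) x₂).re := by
        rw [show x₂ * (starRingEnd ℂ) x₁ = (starRingEnd ℂ) (x₁ * (starRingEnd ℂ) x₂) by
          simp [mul_comm]]
        simp [Complex.conj_re]
      rw [this, hre]
    have h22 : (x₂ * (starRingEnd ℂ) x₂).re = 12 := by
      rw [Complex.mul_conj]; simp [n2]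
    rw [h21, h22]
    norm_num
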